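/- Let (Ω, μ) be a finite measure space, let U : ℝ → ℝ be nondecreasing, and let δ > 0 and σ > 0 be such that for all y, z ∈ ℝ, |y − z| < σ implies |U(y) − U(z)| ≤ δ. Let A, B : Ω → ℝ be measurable functions such that U∘A and U∘B are integrable and (A − B)(U∘A − U∘B) is integrable. Then ∫_Ω |U∘A − U∘B| dμ ≤ (1/σ) ∫_Ω (A − B)(U∘A − U∘B) dμ + δ·μ(Ω). -/

import Mathlib

open MeasureTheory

/-- Abstract key step of the uniform time-translation estimate: for a
nondecreasing `U` such that `|y − z| < σ` implies `|U y − U z| ≤ δ`, the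
`L¹`-distance of `U∘A` and `U∘B` is controlled by the monotone product
`(A − B)(U∘A − U∘B)` up to the error `δ·μ(Ω)`. -/
theorem monotone_translation_estimate
    {Ω : Type*} [MeasurableSpace Ω] (μ : Measure Ω) [IsFiniteMeasure μ]
    (U : ℝ → ℝ) (hU : Monotone U)
    (δ σ : ℝ) (hδ : 0 < δ) (hσ : 0 < σ)
    (huc : ∀ y z : ℝ, |y - z| < σ → |U y - U z| ≤ δ)
    (A B : Ω → ℝ) (hA : Measurable A) (hB : Measurable B)
    (hUA : Integrable (fun x => U (A x)) μ)
    (hUB : Integrable (fun x => U (B x)) μ)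
    (hprod : Integrable (fun x => (A x - B x) * (U (A x) - U (B x))) μ) :
    ∫ x, |U (A x) - U (B x)| ∂μ ≤
      (1 / σ) * ∫ x, (A x - B x) * (U (A x) - U (B x)) ∂μ +
        δ * (μ Set.univ).toReal := by
  have hprodnn : ∀ x, 0 ≤ (A x - B x) * (U (A x) - U (B x)) := by
    intro x
    rcases le_total (A x) (B x) with h | h
    · have := hU h; nlinarith
    · exact mul_nonneg (by linarith) (by linarith [hU h])
  have key : ∀ x, |U (A x) - U (B x)| ≤
      (1 / σ) * ((A x - B x) * (U (A x) - U (B x))) + δ := by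
    intro x
    rcases le_or_gt (|U (A x) - U (B x)|) δ with h | h
    · have := hprodnn x
      have : 0 ≤ (1 / σ) * ((A x - B x) * (U (A x) - U (B x))) :=
        mul_nonneg (by positivity) this
      linarith
    · have hAB : σ ≤ |A x - B x| := by
        by_contra hc
        push_neg at hc
        exact absurd (huc _ _ hc) (not_le.mpr h)
      have heq : (A x - B x) * (U (A x) - U (B x)) = |A x - B x| * |U (A x) - U (B x)| := by
        rw [← abs_mul]
        exact (abs_of_nonneg (hprodnn x)).symm
      have h1 : σ * |U (A x) - U (B x)| ≤ (A x - B x) * (U (A x) - U (B x)) := by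
        rw [heq]
        exact mul_le_mul_of_nonneg_right hAB (abs_nonneg _)
      have h2 : |U (A x) - U (B x)| ≤ (1 / σ) * ((A x - B x) * (U (A x) - U (B x))) := by
        have : (1 / σ) * (σ * |U (A x) - U (B x)|) ≤ (1 / σ) * ((A x - B x) * (U (A x) - U (B x))) :=
          mul_le_mul_of_nonneg_left h1 (by positivity)
        rw [← mul_assoc, one_div_mul_cancel (ne_of_gt hσ), one_mul] at this
        linarith
      linarith
  have hint1 : Integrable (fun x => |U (A x) - U (B x)|) μ := (hUA.sub hUB).abs
  have hint2 : Integrable (fun x => (1 / σ) * ((A x - B x) * (U (A x) - U (B x))) + δ) μ :=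
    (hprod.const_mul _).add (integrable_const δ)
  calc ∫ x, |U (A x) - U (B x)| ∂μ
      ≤ ∫ x, ((1 / σ) * ((A x - B x) * (U (A x) - U (B x))) + δ) ∂μ :=
        integral_mono hint1 hint2 key
    _ = (1 / σ) * ∫ x, (A x - B x) * (U (A x) - U (B x)) ∂μ + δ * (μ Set.univ).toReal := by
        rw [integral_add (hprod.const_mul _) (integrable_const δ), integral_const_mul,
          integral_const, smul_eq_mul, measureReal_def]
        ring
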